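/- For all integers d ≥ 2 and n ≥ 0, let d_R := max_{λ ∈ R_{n,d}} d_λ and d_tot := Σ_{λ ∈ R_{n,d}} d_λ. Then ⌈log₂ d_tot⌉ − ⌈log₂ d_R⌉ ≤ (d − 1) · log₂(n+1) + 1, where the logarithms are real-valued and ⌈·⌉ is the ceiling function. -/

import Mathlib

/-- The set of Young diagrams with at most `d` rows and `n` boxes. -/
def youngSet (n d : ℕ) : Set (Fin d → ℕ) := {l | Antitone l ∧ ∑ i, l i = n}

/-- The Weyl dimension formula (as a real number) for the `SU(d)` irreducible
representation with Young diagram `l`. -/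
noncomputable def weylDim (d : ℕ) (l : Fin d → ℕ) : ℝ :=
  (∏ i : Fin d, ∏ j ∈ Finset.Ioi i, (((l i : ℝ) - (l j : ℝ)) + ((j : ℕ) : ℝ) - ((i : ℕ) : ℝ))) /
    (∏ k ∈ Finset.range d, (Nat.factorial k : ℝ))

lemma young_le {n d : ℕ} {l : Fin d → ℕ} (hl : l ∈ youngSet n d) (i : Fin d) : l i ≤ n := by
  have := Finset.single_le_sum (f := l) (fun j _ => Nat.zero_le _) (Finset.mem_univ i)
  exact hl.2 ▸ this

lemma youngSet_finite (n d : ℕ) : (youngSet n d).Finite := by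
  apply Set.Finite.subset (Set.finite_Icc (fun _ : Fin d => 0) (fun _ : Fin d => n))
  intro l hl
  constructor
  · intro i; exact Nat.zero_le _
  · intro i; exact young_le hl i

lemma weylDim_pos {n d : ℕ} {l : Fin d → ℕ} (hl : l ∈ youngSet n d) : 0 < weylDim d l := by
  unfold weylDim
  apply div_pos
  · apply Finset.prod_pos
    intro i _
    apply Finset.prod_pos
    intro j hj
    have hij : i < j := Finset.mem_Ioi.mp hj
    have h1 : l j ≤ l i := hl.1 hij.le
    have h1' : (l j : ℝ) ≤ (l i : ℝ) := by exact_mod_cast h1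
    have h2 : (i : ℕ) < (j : ℕ) := hij
    have h2' : ((i : ℕ) : ℝ) < ((j : ℕ) : ℝ) := by exact_mod_cast h2
    linarith
  · apply Finset.prod_pos
    intro k _
    exact_mod_cast Nat.factorial_pos k

lemma young_card (n d' : ℕ) :
    (youngSet_finite n (d' + 1)).toFinset.card ≤ (n + 1) ^ d' := by
  have hcard : Fintype.card (Fin d' → Fin (n + 1)) = (n + 1) ^ d' := by
    simp [Fintype.card_fun]
  rw [← hcard, ← Finset.card_univ]
  apply Finset.card_le_card_of_injOn
      (f := fun (l : Fin (d' + 1) → ℕ) (i : Fin d') =>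
        (⟨min (l i.succ) n, Nat.lt_succ_of_le (min_le_right _ _)⟩ : Fin (n + 1)))
  · intro _ _; exact Finset.mem_univ _
  · intro l hl m hm h
    have hl' : l ∈ youngSet n (d' + 1) := (Set.Finite.mem_toFinset _).mp hl
    have hm' : m ∈ youngSet n (d' + 1) := (Set.Finite.mem_toFinset _).mp hm
    have htail : ∀ i : Fin d', l i.succ = m i.succ := by
      intro i
      have := congrFun h i
      have h1 : min (l i.succ) n = l i.succ := min_eq_left (young_le hl' _)
      have h2 : min (m i.succ) n = m i.succ := min_eq_left (young_le hm' _)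
      have := Fin.mk.injEq _ _ _ _ ▸ this
      simpa [h1, h2, Fin.ext_iff] using this
    have hsl : l 0 + ∑ i : Fin d', l i.succ = n := by
      rw [← Fin.sum_univ_succ]; exact hl'.2
    have hsm : m 0 + ∑ i : Fin d', m i.succ = n := by
      rw [← Fin.sum_univ_succ]; exact hm'.2
    have hts : ∑ i : Fin d', l i.succ = ∑ i : Fin d', m i.succ :=
      Finset.sum_congr rfl (fun i _ => htail i)
    have h0 : l 0 = m 0 := by omega
    funext i
    cases i using Fin.cases with
    | zero => exact h0
    | succ i => exact htail i

theorem cost_saving_le (d n : ℕ) (hd : 2 ≤ d) :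
    (⌈Real.logb 2 (∑ᶠ l ∈ youngSet n d, weylDim d l)⌉ : ℝ)
        - (⌈Real.logb 2 (sSup (weylDim d '' youngSet n d))⌉ : ℝ)
      ≤ ((d : ℝ) - 1) * Real.logb 2 ((n : ℝ) + 1) + 1 := by
  obtain ⟨d', rfl⟩ : ∃ d', d = d' + 1 := ⟨d - 1, by omega⟩
  set S := youngSet n (d' + 1) with hS
  have hfin := youngSet_finite n (d' + 1)
  have hne : S.Nonempty := by
    refine ⟨fun i => if i = 0 then n else 0, ?_, ?_⟩
    · intro i j hij
      by_cases hj : j = 0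
      · have : i = 0 := le_antisymm (hj ▸ hij) (Fin.zero_le i)
        simp [hj, this]
      · simp only [hj, if_neg]
        positivity
    · simp
  set f := weylDim (d' + 1) with hf
  have himg : (f '' S).Finite := hfin.image _
  have himgne : (f '' S).Nonempty := hne.image _
  set M := sSup (f '' S) with hM
  have hMmem : M ∈ f '' S := himgne.csSup_mem himg
  have hMpos : 0 < M := by
    obtain ⟨l, hl, hlf⟩ := hMmem
    exact hlf ▸ weylDim_pos hl
  have hleM : ∀ l ∈ S, f l ≤ M := fun l hl => le_csSup himg.bddAbove ⟨l, hl, rfl⟩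
  have hsum_eq : ∑ᶠ l ∈ S, f l = ∑ l ∈ hfin.toFinset, f l := by
    rw [← finsum_mem_coe_finset, Set.Finite.coe_toFinset]
  set T := hfin.toFinset with hT
  have hTne : T.Nonempty := by
    rw [hT, Set.Finite.toFinset_nonempty]; exact hne
  have hsum_pos : 0 < ∑ l ∈ T, f l :=
    Finset.sum_pos (fun l hl => weylDim_pos ((Set.Finite.mem_toFinset _).mp hl)) hTne
  have hsum_le : ∑ l ∈ T, f l ≤ (T.card : ℝ) * M := by
    have := Finset.sum_le_card_nsmul T f M
      (fun l hl => hleM l ((Set.Finite.mem_toFinset _).mp hl))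
    simpa [nsmul_eq_mul] using this
  have hcard : (T.card : ℝ) ≤ ((n : ℝ) + 1) ^ d' := by
    have := young_card n d'
    calc (T.card : ℝ) ≤ (((n + 1) ^ d' : ℕ) : ℝ) := by exact_mod_cast this
      _ = ((n : ℝ) + 1) ^ d' := by push_cast; ring
  have hsum_le2 : ∑ l ∈ T, f l ≤ ((n : ℝ) + 1) ^ d' * M := by
    calc ∑ l ∈ T, f l ≤ (T.card : ℝ) * M := hsum_le
      _ ≤ ((n : ℝ) + 1) ^ d' * M := by
        apply mul_le_mul_of_nonneg_right hcard hMpos.le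
  have hnp : (0 : ℝ) < (n : ℝ) + 1 := by positivity
  have hlog_le : Real.logb 2 (∑ l ∈ T, f l) ≤
      (d' : ℝ) * Real.logb 2 ((n : ℝ) + 1) + Real.logb 2 M := by
    have h1 : Real.logb 2 (∑ l ∈ T, f l) ≤ Real.logb 2 (((n : ℝ) + 1) ^ d' * M) :=
      Real.logb_le_logb_of_le (by norm_num) hsum_pos hsum_le2
    rw [Real.logb_mul (by positivity) hMpos.ne', Real.logb_pow] at h1
    linarith
  have hceil1 : (⌈Real.logb 2 (∑ l ∈ T, f l)⌉ : ℝ) < Real.logb 2 (∑ l ∈ T, f l) + 1 :=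
    Int.ceil_lt_add_one _
  have hceil2 : Real.logb 2 M ≤ (⌈Real.logb 2 M⌉ : ℝ) := Int.le_ceil _
  rw [hsum_eq]
  push_cast
  nlinarith [hceil1, hceil2, hlog_le]
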